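/- Let A be an n×n complex Hermitian matrix with eigenvalues λ_1, …, λ_n listed with multiplicity. Then there exists a permutation σ of {1,…,n} such that |A_{i,i} − λ_{σ(i)}| ≤ √2·P(A) for every i, where A_{i,i} are the (real) diagonal entries of A. -/

import Mathlib

open Matrix Real Complex Finset Filter

noncomputable section

/-- The `n × n` complex plane-rotation matrix `R_{l,m}(θ,φ)`: equal to the identity except
that its `(l,l)` and `(m,m)` entries equal `cos θ`, its `(l,m)` entry equals
`e^{-iφ}·sin θ`, and its `(m,l)` entry equals `-e^{iφ}·sin θ`. -/
def planeRot (n : ℕ) (l m : Fin n) (θ φ : ℝ) : Matrix (Fin n) (Fin n) ℂ :=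
  fun i j =>
    if i = l ∧ j = l then (Real.cos θ : ℂ)
    else if i = m ∧ j = m then (Real.cos θ : ℂ)
    else if i = l ∧ j = m then Complex.exp (-(φ : ℂ) * Complex.I) * (Real.sin θ : ℂ)
    else if i = m ∧ j = l then -(Complex.exp ((φ : ℂ) * Complex.I) * (Real.sin θ : ℂ))
    else if i = j then 1 else 0

/-- `r_{l,m}(θ,φ)`: the `l`-th column of `R_{l,m}(θ,φ)`. -/
def rotCol (n : ℕ) (l m : Fin n) (θ φ : ℝ) : Fin n → ℂ :=
  fun i => planeRot n l m θ φ i l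

/-- `P(A)`: the Frobenius norm of the strictly upper-triangular part of `A`. -/
def offP {n : ℕ} (A : Matrix (Fin n) (Fin n) ℂ) : ℝ :=
  Real.sqrt (∑ l, ∑ m, if l < m then ‖A l m‖ ^ 2 else 0)

/-- The Frobenius norm of a matrix. -/
def frob {n : ℕ} (A : Matrix (Fin n) (Fin n) ℂ) : ℝ :=
  Real.sqrt (∑ i, ∑ j, ‖A i j‖ ^ 2)

/-- `B` is the result of an `η`-accurate Jacobi rotation of the Hermitian matrix `A`
at the pair `(l,m)`. -/
def JacobiStep {n : ℕ} (η : ℝ) (l m : Fin n) (A B : Matrix (Fin n) (Fin n) ℂ) : Prop :=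
  ∃ θh φh ηφ ηθ : ℝ,
    |θh| ≤ π / 4 ∧ |ηφ| ≤ η ∧ |ηθ| ≤ η ∧
    φh = -Complex.arg (A l m) + ηφ ∧
    ((A l l ≠ A m m ∧
        θh = (1 / 2) * Real.arctan (2 * ‖A l m‖ * Real.cos ηφ /
              ((A m m).re - (A l l).re)) + ηθ) ∨
      (A l l = A m m ∧ (θh = 0 ∨ θh = π / 4 ∨ θh = -(π / 4)))) ∧
    B = (planeRot n l m θh φh)ᴴ * A * planeRot n l m θh φh

/-- The pairs of one cyclic Jacobi sweep, in row (lexicographic) order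
`(1,2),(1,3),…,(1,n),(2,3),…,(n−1,n)`. -/
def sweepList (n : ℕ) : List (Fin n × Fin n) :=
  (List.finRange n).flatMap fun l =>
    (List.finRange n).filterMap fun m => if l < m then some (l, m) else none

/-- Henrici's diagonal–eigenvalue affiliation bound: some permutation of
the eigenvalues is within `√2·P(A)` of the corresponding diagonal entries. -/
theorem diagonal_eigenvalue_affiliation
    {n : ℕ} (A : Matrix (Fin n) (Fin n) ℂ) (hA : A.IsHermitian)
    (lam : Fin n → ℝ)
    (hspec : ∃ U ∈ Matrix.unitaryGroup (Fin n) ℂ,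
      A = U * Matrix.diagonal (fun i => (lam i : ℂ)) * Uᴴ) :
    ∃ σ : Equiv.Perm (Fin n), ∀ i : Fin n,
      |(A i i).re - lam (σ i)| ≤ Real.sqrt 2 * offP A := by
  classical
  obtain ⟨U, hU, hAU⟩ := hspec
  set d : Fin n → ℝ := fun i => (A i i).re with hd
  set S : Matrix (Fin n) (Fin n) ℝ := fun i j => Complex.normSq (U i j) with hS
  set Q : ℝ := ∑ l, ∑ m, if l < m then Complex.normSq (A l m) else 0 with hQdef
  -- Q equals the quantity in the statement
  have hQeq : (∑ l, ∑ m, if l < m then ‖A l m‖ ^ 2 else 0) = Q := by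
    refine Finset.sum_congr rfl fun l _ => Finset.sum_congr rfl fun m _ => ?_
    by_cases h : l < m <;> simp [h, Complex.sq_norm]
  have hQ0 : 0 ≤ Q := by
    refine Finset.sum_nonneg fun l _ => Finset.sum_nonneg fun m _ => ?_
    by_cases h : l < m <;> simp [h, Complex.normSq_nonneg]
  -- S is doubly stochastic
  have hSds : S ∈ doublyStochastic ℝ (Fin n) := by
    rw [mem_doublyStochastic_iff_sum]
    refine ⟨fun i j => Complex.normSq_nonneg _, fun i => ?_, fun j => ?_⟩
    · have h1 := Matrix.mem_unitaryGroup_iff.mp hU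
      have h2 := congrFun (congrFun h1 i) i
      simp only [Matrix.mul_apply, Matrix.star_apply, Matrix.one_apply_eq] at h2
      have h3 : ∑ k, (Complex.normSq (U i k) : ℂ) = 1 := by
        rw [← h2]; exact Finset.sum_congr rfl fun k _ => (Complex.mul_conj _).symm
      exact_mod_cast h3
    · have h1 := Matrix.mem_unitaryGroup_iff'.mp hU
      have h2 := congrFun (congrFun h1 j) j
      simp only [Matrix.mul_apply, Matrix.star_apply, Matrix.one_apply_eq] at h2
      have h3 : ∑ i, (Complex.normSq (U i j) : ℂ) = 1 := by
        rw [← h2]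
        exact Finset.sum_congr rfl fun i _ => by rw [mul_comm]; exact (Complex.mul_conj _).symm
      exact_mod_cast h3
  -- diagonal entries in terms of S
  have hdS : ∀ i, d i = ∑ j, S i j * lam j := by
    intro i
    have h : A i i = ((∑ j, Complex.normSq (U i j) * lam j : ℝ) : ℂ) := by
      rw [hAU, Matrix.mul_apply]
      push_cast
      refine Finset.sum_congr rfl fun j _ => ?_
      rw [Matrix.mul_diagonal, Matrix.conjTranspose_apply]
      have : (Complex.normSq (U i j) : ℂ) = U i j * star (U i j) := (Complex.mul_conj _).symm
      rw [this]; ring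
    show (A i i).re = _
    rw [h, Complex.ofReal_re]
  -- trace identity
  have htrace : ∑ i, ∑ j, Complex.normSq (A i j) = ∑ j, (lam j)^2 := by
    have hU' : Uᴴ * U = 1 := Matrix.mem_unitaryGroup_iff'.mp hU
    have hAA : A * A = U * (Matrix.diagonal (fun i => ((lam i : ℂ))^2)) * Uᴴ := by
      rw [hAU]
      calc U * Matrix.diagonal (fun i => (lam i : ℂ)) * Uᴴ *
            (U * Matrix.diagonal (fun i => (lam i : ℂ)) * Uᴴ)
          = U * Matrix.diagonal (fun i => (lam i : ℂ)) * (Uᴴ * U) *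
            (Matrix.diagonal (fun i => (lam i : ℂ)) * Uᴴ) := by
            simp only [Matrix.mul_assoc]
        _ = U * (Matrix.diagonal (fun i => (lam i : ℂ)) *
              Matrix.diagonal (fun i => (lam i : ℂ))) * Uᴴ := by
            rw [hU', Matrix.mul_one]; simp only [Matrix.mul_assoc]
        _ = U * (Matrix.diagonal (fun i => ((lam i : ℂ))^2)) * Uᴴ := by
            rw [Matrix.diagonal_mul_diagonal]
            congr 1; ext i; ring_nf
    have htr : (A * A).trace = ∑ j, ((lam j : ℂ))^2 := by
      rw [hAA, Matrix.trace_mul_comm, ← Matrix.mul_assoc, hU', Matrix.one_mul,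
        Matrix.trace_diagonal]
    have h1 : (A * A).trace = ((∑ i, ∑ j, Complex.normSq (A i j) : ℝ) : ℂ) := by
      rw [Matrix.trace]
      push_cast
      refine Finset.sum_congr rfl fun i _ => ?_
      rw [Matrix.diag_apply, Matrix.mul_apply]
      refine Finset.sum_congr rfl fun j _ => ?_
      have : A j i = star (A i j) := by
        conv_lhs => rw [← hA.eq, Matrix.conjTranspose_apply]
      rw [this]
      exact Complex.mul_conj _
    rw [h1] at htr
    have h2 : ((∑ i, ∑ j, Complex.normSq (A i j) : ℝ) : ℂ) = ((∑ j, (lam j)^2 : ℝ) : ℂ) := by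
      rw [htr]; push_cast; ring_nf
    exact_mod_cast h2
  -- off-diagonal split
  have hsplit : ∑ i, ∑ j, Complex.normSq (A i j) = ∑ i, (d i)^2 + 2 * Q := by
    have hsym : ∀ l m : Fin n, Complex.normSq (A m l) = Complex.normSq (A l m) := by
      intro l m
      have : A m l = star (A l m) := by
        conv_lhs => rw [← hA.eq, Matrix.conjTranspose_apply]
      rw [this]
      exact Complex.normSq_conj _
    have hdiag : ∀ i : Fin n, Complex.normSq (A i i) = (d i)^2 := by
      intro i
      have : A i i = ((A i i).re : ℂ) := (hA.coe_re_apply_self i).symm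
      rw [this, Complex.normSq_ofReal]
      show _ = ((A i i).re)^2
      ring
    have key : ∀ (i j : Fin n), Complex.normSq (A i j)
        = (if i = j then (d i)^2 else 0)
          + ((if i < j then Complex.normSq (A i j) else 0)
            + (if j < i then Complex.normSq (A i j) else 0)) := by
      intro i j
      rcases lt_trichotomy i j with h | h | h
      · simp [h, h.ne, h.not_gt, not_lt_of_gt h]
      · simp [h, lt_irrefl, hdiag j]
      · simp [h, h.not_gt, not_lt_of_gt h, h.ne']
    calc ∑ i, ∑ j, Complex.normSq (A i j)
        = ∑ i, ∑ j, ((if i = j then (d i)^2 else 0)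
          + ((if i < j then Complex.normSq (A i j) else 0)
            + (if j < i then Complex.normSq (A i j) else 0))) := by
          exact Finset.sum_congr rfl fun i _ => Finset.sum_congr rfl fun j _ => key i j
      _ = ∑ i, (d i)^2
          + (∑ i, ∑ j, (if i < j then Complex.normSq (A i j) else 0)
            + ∑ i, ∑ j, (if j < i then Complex.normSq (A i j) else 0)) := by
          simp only [Finset.sum_add_distrib, Finset.sum_ite_eq, Finset.mem_univ, if_true]
      _ = ∑ i, (d i)^2 + 2 * Q := by
          have : ∑ i, ∑ j, (if j < i then Complex.normSq (A i j) else 0)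
              = ∑ l, ∑ m, (if l < m then Complex.normSq (A l m) else 0) := by
            rw [Finset.sum_comm]
            exact Finset.sum_congr rfl fun l _ => Finset.sum_congr rfl fun m _ => by
              by_cases h : l < m <;> simp [h, hsym]
          rw [this, hQdef]; ring
  -- Birkhoff decomposition
  obtain ⟨w, hw0, hw1, hwS⟩ := exists_eq_sum_perm_of_mem_doublyStochastic hSds
  have hSentry : ∀ i j, S i j = ∑ σ : Equiv.Perm (Fin n), w σ * (if j = σ i then 1 else 0) := by
    intro i j
    have h := congrFun (congrFun hwS i) j
    rw [← h, Matrix.sum_apply]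
    refine Finset.sum_congr rfl fun σ _ => ?_
    simp [Equiv.Perm.permMatrix, PEquiv.toMatrix_apply, Equiv.toPEquiv_apply,
      Matrix.smul_apply, smul_eq_mul, eq_comm]
  have havg : ∀ (f : Fin n → ℝ) (i : Fin n),
      ∑ σ : Equiv.Perm (Fin n), w σ * f (σ i) = ∑ j, S i j * f j := by
    intro f i
    calc ∑ σ : Equiv.Perm (Fin n), w σ * f (σ i)
        = ∑ σ : Equiv.Perm (Fin n), ∑ j, (if j = σ i then w σ * f j else 0) := by
          refine Finset.sum_congr rfl fun σ _ => ?_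
          rw [Finset.sum_ite_eq' Finset.univ (σ i) (fun j => w σ * f j)]
          simp
      _ = ∑ j, (∑ σ : Equiv.Perm (Fin n), w σ * (if j = σ i then 1 else 0)) * f j := by
          rw [Finset.sum_comm]
          refine Finset.sum_congr rfl fun j _ => ?_
          rw [Finset.sum_mul]
          refine Finset.sum_congr rfl fun σ _ => ?_
          by_cases h : j = σ i <;> simp [h]
      _ = ∑ j, S i j * f j := by
          exact Finset.sum_congr rfl fun j _ => by rw [← hSentry i j]
  -- the key average identity
  have hper : ∀ i, ∑ σ : Equiv.Perm (Fin n), w σ * (d i - lam (σ i))^2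
      = ∑ j, S i j * (lam j)^2 - (d i)^2 := by
    intro i
    have e1 : ∀ σ : Equiv.Perm (Fin n), w σ * (d i - lam (σ i))^2
        = (d i)^2 * w σ - 2 * d i * (w σ * lam (σ i)) + w σ * (lam (σ i))^2 := fun σ => by ring
    rw [Finset.sum_congr rfl fun σ _ => e1 σ, Finset.sum_add_distrib, Finset.sum_sub_distrib,
      ← Finset.mul_sum, ← Finset.mul_sum, hw1, havg lam i, havg (fun j => (lam j)^2) i, ← hdS i]
    ring
  have hcol : ∀ j, ∑ i, S i j = 1 := sum_col_of_mem_doublyStochastic hSds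
  have hkey : ∑ σ : Equiv.Perm (Fin n), w σ * (∑ i, (d i - lam (σ i))^2) = 2 * Q := by
    calc ∑ σ : Equiv.Perm (Fin n), w σ * (∑ i, (d i - lam (σ i))^2)
        = ∑ σ : Equiv.Perm (Fin n), ∑ i, w σ * (d i - lam (σ i))^2 := by
          exact Finset.sum_congr rfl fun σ _ => Finset.mul_sum _ _ _
      _ = ∑ i, ∑ σ : Equiv.Perm (Fin n), w σ * (d i - lam (σ i))^2 := Finset.sum_comm
      _ = ∑ i, (∑ j, S i j * (lam j)^2 - (d i)^2) := by
          exact Finset.sum_congr rfl fun i _ => hper i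
      _ = (∑ i, ∑ j, S i j * (lam j)^2) - ∑ i, (d i)^2 := Finset.sum_sub_distrib _ _
      _ = (∑ j, (lam j)^2) - ∑ i, (d i)^2 := by
          congr 1
          rw [Finset.sum_comm]
          refine Finset.sum_congr rfl fun j _ => ?_
          rw [← Finset.sum_mul, hcol j, one_mul]
      _ = 2 * Q := by rw [← htrace, hsplit]; ring
  -- extract a good permutation
  have hex : ∃ σ : Equiv.Perm (Fin n), ∑ i, (d i - lam (σ i))^2 ≤ 2 * Q := by
    by_contra hc
    push_neg at hc
    obtain ⟨σ₀, _, hσ₀⟩ := Finset.exists_ne_zero_of_sum_ne_zero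
      (by rw [hw1]; norm_num : ∑ σ : Equiv.Perm (Fin n), w σ ≠ 0)
    have hσ₀pos : 0 < w σ₀ := lt_of_le_of_ne (hw0 σ₀) (Ne.symm hσ₀)
    have hlt : ∑ σ : Equiv.Perm (Fin n), w σ * (2 * Q)
        < ∑ σ : Equiv.Perm (Fin n), w σ * (∑ i, (d i - lam (σ i))^2) := by
      refine Finset.sum_lt_sum (fun σ _ => ?_) ⟨σ₀, Finset.mem_univ _, ?_⟩
      · rcases (hw0 σ).eq_or_lt with h | h
        · rw [← h]; simp
        · exact mul_le_mul_of_nonneg_left (le_of_lt (hc σ)) (le_of_lt h)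
      · exact mul_lt_mul_of_pos_left (hc σ₀) hσ₀pos
    rw [hkey, ← Finset.sum_mul, hw1, one_mul] at hlt
    exact lt_irrefl _ hlt
  obtain ⟨σ, hσ⟩ := hex
  refine ⟨σ, fun i => ?_⟩
  have h1 : (d i - lam (σ i))^2 ≤ 2 * Q := by
    refine le_trans ?_ hσ
    exact Finset.single_le_sum (fun j _ => sq_nonneg (d j - lam (σ j))) (Finset.mem_univ i)
  have h2 : |d i - lam (σ i)| = Real.sqrt ((d i - lam (σ i))^2) := (Real.sqrt_sq_eq_abs _).symm
  rw [show offP A = Real.sqrt (∑ l, ∑ m, if l < m then ‖A l m‖ ^ 2 else 0) from rfl, hQeq]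
  calc |(A i i).re - lam (σ i)| = Real.sqrt ((d i - lam (σ i))^2) := h2
    _ ≤ Real.sqrt (2 * Q) := Real.sqrt_le_sqrt h1
    _ = Real.sqrt 2 * Real.sqrt Q := Real.sqrt_mul (by norm_num) Q


end
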